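/- Let P be a centrally orthocomplete projection OML of a synaptic algebra, Q ⊆ P a TD set, and c a central projection. Then c ∈ γ(Q) if and only if Q has nonzero intersection with every nonzero direct summand of P[0,c], i.e., for every central projection d with cd ≠ 0 there exists 0 ≠ q ∈ Q with q ≤ cd. -/
import Mathlib


universe u

/-- A (partial axiomatization of a) synaptic algebra: a partially ordered real
vector subspace `A` of an associative unital algebra `R`, closed under squaring
and quadratic maps, in which the projections form an orthomodular lattice with
`p⊥ = 1 - p` and, for projections, `p ≤ q ↔ p * q = p ↔ q * p = p`. -/
structure Synaptic (R : Type u) [Ring R] [PartialOrder R] where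
  A : Set R
  one_mem : (1 : R) ∈ A
  add_mem : ∀ {a b : R}, a ∈ A → b ∈ A → a + b ∈ A
  neg_mem : ∀ {a : R}, a ∈ A → -a ∈ A
  sq_mem : ∀ {a : R}, a ∈ A → a * a ∈ A
  quad_mem : ∀ {a b : R}, a ∈ A → b ∈ A → a * b * a ∈ A
  add_le_add_right : ∀ {a b : R}, a ≤ b → ∀ c : R, a + c ≤ b + c
  sq_nonneg' : ∀ {a : R}, a ∈ A → 0 ≤ a * a
  quad_nonneg : ∀ {a b : R}, a ∈ A → b ∈ A → 0 ≤ b → 0 ≤ a * b * a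
  zero_lt_one' : (0 : R) < 1
  /-- for projections, the order is characterized multiplicatively -/
  proj_le_iff : ∀ {p q : R}, p ∈ A → p * p = p → q ∈ A → q * q = q →
    (p ≤ q ↔ p * q = p ∧ q * p = p)

namespace Synaptic

variable {R : Type u} [Ring R] [PartialOrder R] (S : Synaptic R)

/-- `p` is a projection of `A`. -/
def IsProj (p : R) : Prop := p ∈ S.A ∧ p * p = p

/-- `s` is a symmetry of `A`. -/
def IsSym (s : R) : Prop := s ∈ S.A ∧ s * s = 1

/-- `c` belongs to the center `C(A)` of `A`. -/
def Central (c : R) : Prop := c ∈ S.A ∧ ∀ a ∈ S.A, c * a = a * c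

/-- `c` is a central projection. -/
def IsCentralProj (c : R) : Prop := S.IsProj c ∧ S.Central c

/-- Equivalence of projections: `p ∼ q` iff there is a finite chain of
projections from `p` to `q` in which consecutive members are exchanged by a
symmetry of `A`. -/
def Equiv (p q : R) : Prop :=
  ∃ n : ℕ, ∃ e : ℕ → R, e 0 = p ∧ e n = q ∧ (∀ i ≤ n, S.IsProj (e i)) ∧
    ∀ i < n, ∃ s : R, S.IsSym s ∧ s * e i * s = e (i + 1)

/-- `p ⪯ q`: `p` is equivalent to a subprojection of `q`. -/
def SubEquiv (p q : R) : Prop := ∃ q₁ : R, S.IsProj q₁ ∧ q₁ ≤ q ∧ S.Equiv p q₁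

/-- `p` is the supremum, in the projection lattice `P`, of the set `F` of
projections. -/
def IsSupProj (F : Set R) (p : R) : Prop :=
  S.IsProj p ∧ (∀ q ∈ F, q ≤ p) ∧ ∀ r : R, S.IsProj r → (∀ q ∈ F, q ≤ r) → p ≤ r

/-- `p` is the infimum, in the projection lattice `P`, of the set `F` of
projections. -/
def IsInfProj (F : Set R) (p : R) : Prop :=
  S.IsProj p ∧ (∀ q ∈ F, p ≤ q) ∧ ∀ r : R, S.IsProj r → (∀ q ∈ F, r ≤ q) → r ≤ p

/-- `F` is a (pairwise) orthogonal set of projections. -/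
def OrthSet (F : Set R) : Prop :=
  (∀ p ∈ F, S.IsProj p) ∧ ∀ p ∈ F, ∀ q ∈ F, p ≠ q → p * q = 0

/-- `F` is a centrally orthogonal set of projections: its members are dominated
by a pairwise orthogonal family of central projections. -/
def CentOrthSet (F : Set R) : Prop :=
  (∀ p ∈ F, S.IsProj p) ∧ ∃ c : R → R,
    (∀ p ∈ F, S.IsCentralProj (c p) ∧ p ≤ c p) ∧
    ∀ p ∈ F, ∀ q ∈ F, p ≠ q → c p * c q = 0

/-- The projection lattice `P` is centrally orthocomplete. -/
def CentOrthocomplete : Prop :=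
  ∀ F : Set R, S.CentOrthSet F → ∃ p : R, S.IsSupProj F p

/-- The projection lattice `P` is complete. -/
def CompleteP : Prop :=
  ∀ F : Set R, (∀ p ∈ F, S.IsProj p) → ∃ p : R, S.IsSupProj F p

/-- `c` is the central cover `γ a` of `a`: the smallest central projection `c`
with `a * c = a`. -/
def IsCentralCover (a c : R) : Prop :=
  S.IsCentralProj c ∧ a * c = a ∧
    ∀ d : R, S.IsCentralProj d → a * d = a → c ≤ d

/-- `Q` is a type-determining (TD) set of projections: closed under suprema of
centrally orthogonal families and under meets (= products) with central
projections. -/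
def TD (Q : Set R) : Prop :=
  (∀ q ∈ Q, S.IsProj q) ∧
  (∀ F : Set R, F ⊆ Q → S.CentOrthSet F → ∀ p : R, S.IsSupProj F p → p ∈ Q) ∧
  (∀ q ∈ Q, ∀ c : R, S.IsCentralProj c → q * c ∈ Q)

/-- `Q` is projective: closed under equivalence of projections. -/
def Projective (Q : Set R) : Prop :=
  ∀ p q : R, q ∈ Q → S.Equiv p q → p ∈ Q

/-- `Q` is downward closed (`Q↓ ⊆ Q`). -/
def DownwardClosed (Q : Set R) : Prop :=
  ∀ q ∈ Q, ∀ p : R, S.IsProj p → p ≤ q → p ∈ Q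

/-- The projection `p` is modular: the interval OML `P[0,p]` satisfies the
modular law (stated relationally via suprema and infima in `P`, which agree
with those computed in `P[0,p]`). -/
def ModularProj (p : R) : Prop :=
  S.IsProj p ∧ ∀ a b c : R, S.IsProj a → S.IsProj b → S.IsProj c →
    a ≤ p → b ≤ p → c ≤ p → a ≤ c →
    ∀ i s j m : R, S.IsInfProj {b, c} i → S.IsSupProj {a, i} s →
      S.IsSupProj {a, b} j → S.IsInfProj {j, c} m → s = m

/-- `p` and `q` are perspective in the interval `P[0,r]`: they have a common
complement `x` there. -/
def PerspectiveIn (r p q : R) : Prop :=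
  ∃ x : R, S.IsProj x ∧ x ≤ r ∧ S.IsSupProj {p, x} r ∧ S.IsSupProj {q, x} r ∧
    S.IsInfProj {p, x} 0 ∧ S.IsInfProj {q, x} 0

end Synaptic

section Aux

variable {R : Type u} [Ring R] [PartialOrder R] (S : Synaptic R)

lemma Synaptic.zero_mem' : (0 : R) ∈ S.A := by
  have := S.add_mem S.one_mem (S.neg_mem S.one_mem)
  simpa using this

lemma Synaptic.le_of_mul {p q : R} (hp : S.IsProj p) (hq : S.IsProj q)
    (h1 : p * q = p) (h2 : q * p = p) : p ≤ q :=
  (S.proj_le_iff hp.1 hp.2 hq.1 hq.2).mpr ⟨h1, h2⟩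

lemma Synaptic.mul_of_le {p q : R} (hp : S.IsProj p) (hq : S.IsProj q)
    (h : p ≤ q) : p * q = p :=
  ((S.proj_le_iff hp.1 hp.2 hq.1 hq.2).mp h).1

lemma Synaptic.mul_of_le' {p q : R} (hp : S.IsProj p) (hq : S.IsProj q)
    (h : p ≤ q) : q * p = p :=
  ((S.proj_le_iff hp.1 hp.2 hq.1 hq.2).mp h).2

lemma Synaptic.mul_central_mem {p d : R} (hp : S.IsProj p)
    (hd : S.Central d) : p * d ∈ S.A := by
  have h := S.quad_mem hp.1 hd.1
  rwa [mul_assoc, hd.2 p hp.1, ← mul_assoc, hp.2] at h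

lemma Synaptic.isProj_mul_central {p d : R} (hp : S.IsProj p)
    (hd : S.IsCentralProj d) : S.IsProj (p * d) := by
  refine ⟨S.mul_central_mem hp hd.2, ?_⟩
  calc p * d * (p * d) = p * (d * p) * d := by rw [mul_assoc, mul_assoc, mul_assoc]
    _ = p * (p * d) * d := by rw [hd.2.2 p hp.1]
    _ = p * p * (d * d) := by rw [mul_assoc, mul_assoc, mul_assoc]
    _ = p * d := by rw [hp.2, hd.1.2]

lemma Synaptic.isCentralProj_mul {c d : R} (hc : S.IsCentralProj c)
    (hd : S.IsCentralProj d) : S.IsCentralProj (c * d) := by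
  refine ⟨S.isProj_mul_central hc.1 hd, S.mul_central_mem hc.1 hd.2, fun a ha => ?_⟩
  rw [mul_assoc, hd.2.2 a ha, ← mul_assoc, hc.2.2 a ha, mul_assoc]

lemma Synaptic.isCentralProj_one : S.IsCentralProj (1 : R) :=
  ⟨⟨S.one_mem, one_mul 1⟩, S.one_mem, fun a _ => by rw [one_mul, mul_one]⟩

lemma Synaptic.isCentralProj_compl {d : R} (hd : S.IsCentralProj d) :
    S.IsCentralProj (1 - d) := by
  have hm : (1 : R) - d ∈ S.A := by
    rw [sub_eq_add_neg]; exact S.add_mem S.one_mem (S.neg_mem hd.1.1)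
  refine ⟨⟨hm, ?_⟩, hm, fun a ha => ?_⟩
  · have h : (1 - d) * (1 - d) = 1 - d - d + d * d := by noncomm_ring
    rw [h, hd.1.2]; abel
  · rw [sub_mul, mul_sub, one_mul, mul_one, hd.2.2 a ha]

lemma Synaptic.le_gamma {γ : R → R} (hγ : ∀ r : R, S.IsProj r → S.IsCentralCover r (γ r))
    {p : R} (hp : S.IsProj p) : p ≤ γ p := by
  have h := hγ p hp
  exact S.le_of_mul hp h.1.1 h.2.1 (by rw [h.1.2.2 p hp.1, h.2.1])

lemma Synaptic.gamma_le_of {γ : R → R} (hγ : ∀ r : R, S.IsProj r → S.IsCentralCover r (γ r))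
    {p d : R} (hp : S.IsProj p) (hd : S.IsCentralProj d) (h : p * d = p) :
    γ p ≤ d :=
  (hγ p hp).2.2 d hd h

lemma Synaptic.eq_zero_of_gamma_eq_zero {γ : R → R}
    (hγ : ∀ r : R, S.IsProj r → S.IsCentralCover r (γ r))
    {p : R} (hp : S.IsProj p) (h : γ p = 0) : p = 0 := by
  have := (hγ p hp).2.1
  rw [h, mul_zero] at this
  exact this.symm

lemma Synaptic.gamma_mono {γ : R → R} (hγ : ∀ r : R, S.IsProj r → S.IsCentralCover r (γ r))
    {p q : R} (hp : S.IsProj p) (hq : S.IsProj q) (h : p ≤ q) : γ p ≤ γ q := by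
  refine S.gamma_le_of hγ hp (hγ q hq).1 ?_
  have h1 : p * q = p := S.mul_of_le hp hq h
  have h2 : q * γ q = q := (hγ q hq).2.1
  calc p * γ q = p * q * γ q := by rw [h1]
    _ = p * (q * γ q) := by rw [mul_assoc]
    _ = p * q := by rw [h2]
    _ = p := h1

end Aux

/-- For a TD set `Q` and a central projection `c`: `c ∈ γ(Q)` iff `Q` has
nonzero intersection with every nonzero direct summand of `P[0,c]`. -/
theorem central_mem_gammaQ_iff {R : Type u} [Ring R] [PartialOrder R]
    (S : Synaptic R) (hco : S.CentOrthocomplete)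
    (γ : R → R) (hγ : ∀ r : R, S.IsProj r → S.IsCentralCover r (γ r))
    (Q : Set R) (hQ : S.TD Q) (c : R) (hc : S.IsCentralProj c) :
    (∃ q ∈ Q, γ q = c) ↔
      (∀ d : R, S.IsCentralProj d → c * d ≠ 0 →
        ∃ q ∈ Q, q ≠ 0 ∧ q ≤ c * d) := by
  obtain ⟨hQp, hQsup, hQmul⟩ := hQ
  constructor
  · -- forward direction
    rintro ⟨q, hqQ, hγq⟩ d hd hcd
    have hq : S.IsProj q := hQp q hqQ
    refine ⟨q * d, hQmul q hqQ d hd, ?_, ?_⟩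
    · -- q * d ≠ 0
      intro h0
      apply hcd
      have hq1d : q * (1 - d) = q := by rw [mul_sub, mul_one, h0, sub_zero]
      have hle : γ q ≤ 1 - d :=
        S.gamma_le_of hγ hq (S.isCentralProj_compl hd) hq1d
      rw [hγq] at hle
      have : c * (1 - d) = c := S.mul_of_le hc.1 (S.isCentralProj_compl hd).1 hle
      rw [mul_sub, mul_one] at this
      have := congrArg (fun x => c - x) this
      simpa using this
    · -- q * d ≤ c * d
      have hqc : q ≤ c := by
        have h1 : q * c = q := by rw [← hγq]; exact (hγ q hq).2.1
        exact S.le_of_mul hq hc.1 h1 (by rw [hc.2.2 q hq.1, h1])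
      have hqc1 : q * c = q := S.mul_of_le hq hc.1 hqc
      have hqc2 : c * q = q := S.mul_of_le' hq hc.1 hqc
      refine S.le_of_mul (S.isProj_mul_central hq hd) (S.isProj_mul_central hc.1 hd) ?_ ?_
      · calc q * d * (c * d) = q * (d * c) * d := by
              rw [mul_assoc, mul_assoc, mul_assoc]
          _ = q * (c * d) * d := by rw [hd.2.2 c hc.1.1]
          _ = q * c * (d * d) := by rw [mul_assoc, mul_assoc, mul_assoc]
          _ = q * d := by rw [hqc1, hd.1.2]
      · calc c * d * (q * d) = c * (d * q) * d := by
              rw [mul_assoc, mul_assoc, mul_assoc]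
          _ = c * (q * d) * d := by rw [hd.2.2 q hq.1]
          _ = c * q * (d * d) := by rw [mul_assoc, mul_assoc, mul_assoc]
          _ = q * d := by rw [hqc2, hd.1.2]
  · -- backward direction
    intro hmeet
    -- Zorn's lemma: maximal centrally orthogonal family of nonzero elements
    -- of Q below c
    set 𝒮 : Set (Set R) :=
      {F | F ⊆ Q ∧ (∀ x ∈ F, x ≠ 0 ∧ x ≤ c) ∧
        ∀ x ∈ F, ∀ y ∈ F, x ≠ y → γ x * γ y = 0} with h𝒮
    obtain ⟨F, hF⟩ : ∃ F, Maximal (· ∈ 𝒮) F := by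
      apply zorn_subset
      intro C hC hchain
      refine ⟨⋃₀ C, ⟨?_, ?_, ?_⟩, fun s hs => Set.subset_sUnion_of_mem hs⟩
      · rintro x ⟨t, htC, hxt⟩
        exact (hC htC).1 hxt
      · rintro x ⟨t, htC, hxt⟩
        exact (hC htC).2.1 x hxt
      · rintro x ⟨t, htC, hxt⟩ y ⟨u, huC, hyu⟩ hxy
        rcases hchain.total htC huC with h | h
        · exact (hC huC).2.2 x (h hxt) y hyu hxy
        · exact (hC htC).2.2 x hxt y (h hyu) hxy
    obtain ⟨⟨hFQ, hFnz, hForth⟩, hFmax⟩ := hF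
    -- F is a centrally orthogonal set, take its supremum p
    have hFproj : ∀ x ∈ F, S.IsProj x := fun x hx => hQp x (hFQ hx)
    have hcent : S.CentOrthSet F := by
      refine ⟨hFproj, γ, fun x hx => ⟨(hγ x (hFproj x hx)).1, S.le_gamma hγ (hFproj x hx)⟩,
        hForth⟩
    obtain ⟨p, hsup⟩ := hco F hcent
    have hpQ : p ∈ Q := hQsup F hFQ hcent p hsup
    have hp : S.IsProj p := hsup.1
    have hpc : p ≤ c := hsup.2.2 c hc.1 (fun x hx => (hFnz x hx).2)
    have hγpc : γ p ≤ c := S.gamma_le_of hγ hp hc (S.mul_of_le hp hc.1 hpc)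
    have hγpcp : S.IsCentralProj (γ p) := (hγ p hp).1
    refine ⟨p, hpQ, ?_⟩
    by_contra hne
    -- d := c * (1 - γ p) is a nonzero central direct summand avoiding Q
    set d : R := c * (1 - γ p) with hd_def
    have hdcp : S.IsCentralProj d := S.isCentralProj_mul hc (S.isCentralProj_compl hγpcp)
    have hγpc1 : γ p * c = γ p := S.mul_of_le hγpcp.1 hc.1 hγpc
    have hγpc2 : c * γ p = γ p := S.mul_of_le' hγpcp.1 hc.1 hγpc
    have hdne : d ≠ 0 := by
      intro h0
      apply hne
      rw [hd_def, mul_sub, mul_one, hγpc2, sub_eq_zero] at h0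
      exact h0.symm
    have hcd : c * d ≠ 0 := by
      have : c * d = d := by
        rw [hd_def, ← mul_assoc, hc.1.2]
      rwa [this]
    obtain ⟨q', hq'Q, hq'ne, hq'le⟩ := hmeet d hdcp hcd
    have hcd' : c * d = d := by rw [hd_def, ← mul_assoc, hc.1.2]
    rw [hcd'] at hq'le
    have hq' : S.IsProj q' := hQp q' hq'Q
    have hq'd : q' * d = q' := S.mul_of_le hq' hdcp.1 hq'le
    have hγq'd : γ q' ≤ d := S.gamma_le_of hγ hq' hdcp hq'd
    have hγq'dm : γ q' * d = γ q' := S.mul_of_le (hγ q' hq').1.1 hdcp.1 hγq'd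
    -- d * γ p = 0
    have hdγp : d * γ p = 0 := by
      rw [hd_def, mul_assoc, sub_mul, one_mul, hγpcp.1.2, sub_self, mul_zero]
    -- q' ≤ c
    have hq'c : q' ≤ c := by
      have hdc : d * c = d := by
        rw [hd_def, mul_assoc, ← hc.2.2 (1 - γ p) (S.isCentralProj_compl hγpcp).1.1,
          ← mul_assoc, hc.1.2]
      have h1 : q' * c = q' := by rw [← hq'd, mul_assoc, hdc]
      exact S.le_of_mul hq' hc.1 h1 (by rw [hc.2.2 q' hq'.1, h1])
    -- central covers of elements of F are killed by γ q'
    have hkill : ∀ x ∈ F, γ q' * γ x = 0 ∧ γ x * γ q' = 0 := by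
      intro x hx
      have hxp : x ≤ p := hsup.2.1 x hx
      have hγx : γ x ≤ γ p := S.gamma_mono hγ (hFproj x hx) hp hxp
      have hγxcp : S.IsCentralProj (γ x) := (hγ x (hFproj x hx)).1
      have h1 : γ p * γ x = γ x := S.mul_of_le' hγxcp.1 hγpcp.1 hγx
      have hdx : d * γ x = 0 := by
        rw [← h1, ← mul_assoc, hdγp, zero_mul]
      have h2 : γ q' * γ x = 0 := by
        rw [← hγq'dm, mul_assoc, hdx, mul_zero]
      refine ⟨h2, ?_⟩
      rw [(hγ q' hq').1.2.2 (γ x) hγxcp.1.1] at h2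
      exact h2
    -- q' ∉ F
    have hq'F : q' ∉ F := by
      intro hmem
      apply hq'ne
      have hγq'p : γ q' ≤ γ p := S.gamma_mono hγ hq' hp (hsup.2.1 q' hmem)
      have h1 : γ q' * γ p = γ q' :=
        S.mul_of_le (hγ q' hq').1.1 hγpcp.1 hγq'p
      have h0 : γ q' = 0 := by
        rw [← h1, ← hγq'dm, mul_assoc, hdγp, mul_zero]
      exact S.eq_zero_of_gamma_eq_zero hγ hq' h0
    -- F ∪ {q'} contradicts maximality
    have hbig : insert q' F ∈ 𝒮 := by
      refine ⟨?_, ?_, ?_⟩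
      · intro x hx
        rcases hx with rfl | hx
        · exact hq'Q
        · exact hFQ hx
      · intro x hx
        rcases hx with rfl | hx
        · exact ⟨hq'ne, hq'c⟩
        · exact hFnz x hx
      · intro x hx y hy hxy
        rcases hx with rfl | hx <;> rcases hy with rfl | hy
        · exact absurd rfl hxy
        · exact (hkill y hy).1
        · exact (hkill x hx).2
        · exact hForth x hx y hy hxy
    exact hq'F (hFmax hbig (Set.subset_insert q' F) (Set.mem_insert q' F))
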